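/- arXiv:2602.16203 — 9 statements merged into one kernel-verified Lean document; each statement's English description precedes it below -/
import Mathlib

section
/- A function f : 2^E → P is (Q3)-submodular if and only if for every pair X, Y ⊆ E, at least one of condition (Q1) or condition (Q2) holds for that pair, i.e., for every X, Y ⊆ E either (f(X) ≤ f(X ∩ Y) implies f(X ∪ Y) ≤ f(Y)) or (f(X) < f(X ∩ Y) implies f(X ∪ Y) < f(Y)). -/
theorem q3_iff_q1_or_q2_pointwise {E : Type*} [Fintype E] [DecidableEq E]
    {P : Type*} [LinearOrder P] (f : Finset E → P) :
    (∀ X Y : Finset E, f X < f (X ∩ Y) → f (X ∪ Y) ≤ f Y) ↔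
      (∀ X Y : Finset E,
        (f X ≤ f (X ∩ Y) → f (X ∪ Y) ≤ f Y) ∨
        (f X < f (X ∩ Y) → f (X ∪ Y) < f Y)) := by
  constructor
  · intro h X Y
    by_cases hc : f (X ∪ Y) ≤ f Y
    · exact Or.inl fun _ => hc
    · exact Or.inr fun hs => absurd (h X Y hs) hc
  · intro h X Y hs
    rcases h X Y with h1 | h2
    · exact h1 hs.le
    · exact (h2 hs).le
end

section
/- Let f : 2^E → P be a (Q1)-submodular function. If X ⊆ E is a minimizer of f over the interval [∅, X] (i.e., f(X) ≤ f(Z) for all Z ⊆ X), then there exists a global minimizer Z* of f over 2^E with X ⊆ Z*. -/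
theorem q1_local_min_extends {E : Type*} [Fintype E] [DecidableEq E]
    {P : Type*} [LinearOrder P] (f : Finset E → P)
    (hQ1 : ∀ X Y : Finset E, f X ≤ f (X ∩ Y) → f (X ∪ Y) ≤ f Y)
    (X : Finset E) (hX : ∀ Z : Finset E, Z ⊆ X → f X ≤ f Z) :
    ∃ Zstar : Finset E, X ⊆ Zstar ∧ ∀ Z : Finset E, f Zstar ≤ f Z := by
  obtain ⟨Y, -, hY⟩ := Finset.exists_min_image Finset.univ f ⟨∅, Finset.mem_univ ∅⟩
  refine ⟨X ∪ Y, Finset.subset_union_left, fun Z => ?_⟩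
  have h1 : f (X ∪ Y) ≤ f Y := hQ1 X Y (hX _ Finset.inter_subset_left)
  exact h1.trans (hY Z (Finset.mem_univ Z))
end

section
/- Let f : 2^E → P be a (Q1)-submodular function. If X* ⊆ E is a minimizer of f over [∅, X*] ∪ [X*, E] (i.e., f(X*) ≤ f(Z) for all Z with Z ⊆ X* or X* ⊆ Z), then X* is a global minimizer of f over 2^E. -/
theorem q1_local_min_is_global {E : Type*} [Fintype E] [DecidableEq E]
    {P : Type*} [LinearOrder P] (f : Finset E → P)
    (hQ1 : ∀ X Y : Finset E, f X ≤ f (X ∩ Y) → f (X ∪ Y) ≤ f Y)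
    (Xstar : Finset E)
    (hX : ∀ Z : Finset E, Z ⊆ Xstar ∨ Xstar ⊆ Z → f Xstar ≤ f Z) :
    ∀ Z : Finset E, f Xstar ≤ f Z := by
  intro Z
  have h1 : f Xstar ≤ f (Xstar ∩ Z) := hX _ (Or.inl (Finset.inter_subset_left))
  have h2 : f (Xstar ∪ Z) ≤ f Z := hQ1 Xstar Z h1
  exact le_trans (hX _ (Or.inr Finset.subset_union_left)) h2
end

section
/- Let f : 2^E → P be a (Q2)-submodular function. If X ⊆ E is a minimizer of f over the interval [X, E] (i.e., f(X) ≤ f(Z) for all Z with X ⊆ Z ⊆ E), then there exists a global minimizer Z* of f over 2^E with Z* ⊆ X. -/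
theorem q2_local_min_restricts {E : Type*} [Fintype E] [DecidableEq E]
    {P : Type*} [LinearOrder P] (f : Finset E → P)
    (hQ2 : ∀ X Y : Finset E, f X < f (X ∩ Y) → f (X ∪ Y) < f Y)
    (X : Finset E) (hX : ∀ Z : Finset E, X ⊆ Z → f X ≤ f Z) :
    ∃ Zstar : Finset E, Zstar ⊆ X ∧ ∀ Z : Finset E, f Zstar ≤ f Z := by
  obtain ⟨Y, -, hY⟩ := Finset.exists_min_image (Finset.univ : Finset (Finset E)) f
    ⟨∅, Finset.mem_univ _⟩
  have hY' : ∀ Z : Finset E, f Y ≤ f Z := fun Z => hY Z (Finset.mem_univ _)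
  refine ⟨X ∩ Y, Finset.inter_subset_left, fun Z => ?_⟩
  have hle : f (X ∩ Y) ≤ f Y := by
    by_contra h
    push_neg at h
    rw [show X ∩ Y = Y ∩ X from Finset.inter_comm _ _] at h
    have := hQ2 Y X h
    exact absurd (hX (Y ∪ X) Finset.subset_union_right) (not_le.mpr this)
  exact hle.trans (hY' Z)
end

section
/- Let f : 2^E → P be a (Q2)-submodular function. If X* ⊆ E satisfies f(X*) ≤ f(Z) for all Z with Z ⊆ X* or X* ⊆ Z, then X* is a global minimizer of f over 2^E. -/
theorem q2_local_min_is_global {E : Type*} [Fintype E] [DecidableEq E]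
    {P : Type*} [LinearOrder P] (f : Finset E → P)
    (hQ2 : ∀ X Y : Finset E, f X < f (X ∩ Y) → f (X ∪ Y) < f Y)
    (Xstar : Finset E)
    (hX : ∀ Z : Finset E, Z ⊆ Xstar ∨ Xstar ⊆ Z → f Xstar ≤ f Z) :
    ∀ Z : Finset E, f Xstar ≤ f Z := by
  intro Z
  by_contra h
  push_neg at h
  have h1 : f Xstar ≤ f (Z ∩ Xstar) := hX _ (Or.inl (Finset.inter_subset_right))
  have h2 : f Z < f (Z ∩ Xstar) := lt_of_lt_of_le h h1
  have h3 := hQ2 Z Xstar h2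
  exact absurd (hX _ (Or.inr (Finset.subset_union_right))) (not_le.mpr h3)
end

section
/- Let f : 2^E → P be a (Q4)-submodular function that is injective (f(X) ≠ f(Y) for all distinct X, Y ⊆ E). If X* ⊆ E is a minimizer of f over [∅, X*] ∪ [X*, E], then X* is a global minimizer of f over 2^E, and in fact X* is the unique global minimizer. -/
theorem q4_injective_local_min_is_unique_global {E : Type*} [Fintype E] [DecidableEq E]
    {P : Type*} [LinearOrder P] (f : Finset E → P)
    (hQ4 : ∀ X Y : Finset E, max (f X) (f Y) ≥ min (f (X ∪ Y)) (f (X ∩ Y)))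
    (hinj : Function.Injective f)
    (Xstar : Finset E)
    (hX : ∀ Z : Finset E, Z ⊆ Xstar ∨ Xstar ⊆ Z → f Xstar ≤ f Z) :
    (∀ Z : Finset E, f Xstar ≤ f Z) ∧
      (∀ W : Finset E, (∀ Z : Finset E, f W ≤ f Z) → W = Xstar) := by
  have hmain : ∀ Z : Finset E, f Xstar ≤ f Z := by
    intro Z
    by_contra h
    push_neg at h
    have h1 : f Xstar ≤ f (Xstar ∪ Z) := hX _ (Or.inr Finset.subset_union_left)
    have h2 : f Xstar ≤ f (Xstar ∩ Z) := hX _ (Or.inl Finset.inter_subset_left)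
    have hq := hQ4 Xstar Z
    rw [max_eq_left h.le] at hq
    have hmin : min (f (Xstar ∪ Z)) (f (Xstar ∩ Z)) = f Xstar :=
      le_antisymm hq (le_min h1 h2)
    rcases min_cases (f (Xstar ∪ Z)) (f (Xstar ∩ Z)) with ⟨he, _⟩ | ⟨he, _⟩ <;>
      rw [he] at hmin
    · have : Xstar ∪ Z = Xstar := hinj hmin
      have hz : Z ⊆ Xstar := by
        intro a ha; rw [← this]; exact Finset.mem_union_right _ ha
      exact absurd (hX Z (Or.inl hz)) (not_le.mpr h)
    · have : Xstar ∩ Z = Xstar := hinj hmin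
      have hz : Xstar ⊆ Z := by
        intro a ha; have := this ▸ ha; exact (Finset.mem_inter.mp this).2
      exact absurd (hX Z (Or.inr hz)) (not_le.mpr h)
  refine ⟨hmain, fun W hW => hinj (le_antisymm (hW Xstar) (hmain W))⟩
end

section
/- There exists a finite set E and a (Q4)-submodular function f : 2^E → ℝ that is not (Q3)-submodular. In particular, if f and some X, Y ⊆ E satisfy f(X) < f(X ∩ Y) < f(Y) < f(X ∪ Y), then (Q4) holds for that pair (X, Y) but (Q3) fails for it. -/
def gAux : Finset (Fin 2) → ℤ :=
  fun S => if S = ∅ then 1 else if S = {0} then 0 else if S = {1} then 2 else 3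

lemma gAux_q4 : ∀ X Y : Finset (Fin 2),
    max (gAux X) (gAux Y) ≥ min (gAux (X ∪ Y)) (gAux (X ∩ Y)) := by decide

theorem q4_not_q3 :
    (∃ (E : Type) (_ : Fintype E) (_ : DecidableEq E) (f : Finset E → ℝ),
      (∀ X Y : Finset E, max (f X) (f Y) ≥ min (f (X ∪ Y)) (f (X ∩ Y))) ∧
      ¬ (∀ X Y : Finset E, f X < f (X ∩ Y) → f (X ∪ Y) ≤ f Y)) ∧
    (∀ (E : Type) (_ : Fintype E) (_ : DecidableEq E) (f : Finset E → ℝ)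
      (X Y : Finset E),
      f X < f (X ∩ Y) → f (X ∩ Y) < f Y → f Y < f (X ∪ Y) →
        (max (f X) (f Y) ≥ min (f (X ∪ Y)) (f (X ∩ Y))) ∧
        ¬ (f X < f (X ∩ Y) → f (X ∪ Y) ≤ f Y)) := by
  constructor
  · refine ⟨Fin 2, inferInstance, inferInstance, fun S => (gAux S : ℝ), ?_, ?_⟩
    · intro X Y
      have h := gAux_q4 X Y
      have : ((max (gAux X) (gAux Y) : ℤ) : ℝ) ≥
          ((min (gAux (X ∪ Y)) (gAux (X ∩ Y)) : ℤ) : ℝ) := by exact_mod_cast h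
      simpa [Int.cast_max, Int.cast_min] using this
    · intro h
      have := h {0} {1}
      have hXY : ({0} : Finset (Fin 2)) ∩ {1} = ∅ := by decide
      have hU : ({0} : Finset (Fin 2)) ∪ {1} = {0, 1} := by decide
      rw [hXY, hU] at this
      have h1 : gAux {0} = 0 := by decide
      have h2 : gAux (∅ : Finset (Fin 2)) = 1 := by decide
      have h3 : gAux ({0, 1} : Finset (Fin 2)) = 3 := by decide
      have h4 : gAux ({1} : Finset (Fin 2)) = 2 := by decide
      simp only [] at this
      rw [h1, h2, h3, h4] at this
      norm_num at this
  · intro E _ _ f X Y h1 h2 h3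
    constructor
    · have : max (f X) (f Y) = f Y := max_eq_right (by linarith)
      rw [this]
      exact le_trans (min_le_right _ _) (by linarith)
    · intro h
      have := h h1
      linarith
end

section
/- Let f : 2^E → P be a (Q4)-submodular function that is injective on 2^E, and let Z* be its unique global minimizer. Then for any X ⊆ E that minimizes f over [∅, X] ∪ [X, E], we have Z* ⊆ X or X ⊆ Z*. -/
theorem q4_injective_comparable {E : Type*} [Fintype E] [DecidableEq E]
    {P : Type*} [LinearOrder P] (f : Finset E → P)
    (hQ4 : ∀ X Y : Finset E, max (f X) (f Y) ≥ min (f (X ∪ Y)) (f (X ∩ Y)))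
    (hinj : Function.Injective f)
    (Zstar : Finset E) (hZ : ∀ Z : Finset E, f Zstar ≤ f Z)
    (X : Finset E) (hX : ∀ Z : Finset E, Z ⊆ X ∨ X ⊆ Z → f X ≤ f Z) :
    Zstar ⊆ X ∨ X ⊆ Zstar := by
  have h1 : f X ≤ f (X ∪ Zstar) := hX _ (Or.inr Finset.subset_union_left)
  have h2 : f X ≤ f (X ∩ Zstar) := hX _ (Or.inl Finset.inter_subset_left)
  have h3 := hQ4 X Zstar
  rw [max_eq_left (hZ X)] at h3
  rcases le_total (f (X ∪ Zstar)) (f (X ∩ Zstar)) with h | h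
  · rw [min_eq_left h] at h3
    have hx : X = X ∪ Zstar := hinj (le_antisymm h1 h3)
    exact Or.inl (fun a ha => hx ▸ Finset.mem_union_right _ ha)
  · rw [min_eq_right h] at h3
    have hx : X = X ∩ Zstar := hinj (le_antisymm h2 h3)
    exact Or.inr (fun a ha => (Finset.mem_inter.mp (hx ▸ ha)).2)
end

section
/- Let f : 2^E → P be a (Q2)-submodular function. Then the set of global minimizers of f is closed under intersection: if X and Y are both global minimizers of f over 2^E, then X ∩ Y is a global minimizer of f. -/
theorem q2_minimizers_inter_closed {E : Type*} [Fintype E] [DecidableEq E]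
    {P : Type*} [LinearOrder P] (f : Finset E → P)
    (hQ2 : ∀ X Y : Finset E, f X < f (X ∩ Y) → f (X ∪ Y) < f Y)
    (X Y : Finset E)
    (hX : ∀ Z : Finset E, f X ≤ f Z) (hY : ∀ Z : Finset E, f Y ≤ f Z) :
    ∀ Z : Finset E, f (X ∩ Y) ≤ f Z := by
  intro Z
  by_contra h
  push_neg at h
  have h1 : f X < f (X ∩ Y) := lt_of_le_of_lt (hX Z) h
  exact absurd (hQ2 X Y h1) (not_lt.2 (hY _))
end
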